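/- Let σ ≥ 1 and T > 0. Define, for 0 < δ < 1 and 0 ≤ t < T(1-δ)^σ/(2^σ - 1), the function δ(t) = (1/2)(1+δ) + (1/2)^{2+1/δ} { [(1-δ)^σ - t/T]^{1/σ} - [(1-δ)^σ + (2^{σ+1}-1) t/T]^{1/σ} }. Then δ < δ(t) < 1 for all such t. -/
import Mathlib


theorem ovsyannikov_radius_bounds (σ T δ : ℝ) (hσ : 1 ≤ σ) (hT : 0 < T)
    (hδ0 : 0 < δ) (hδ1 : δ < 1) (t : ℝ) (ht0 : 0 ≤ t)
    (ht : t < T * (1 - δ) ^ σ / (2 ^ σ - 1)) :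
    δ < (1 / 2) * (1 + δ) + (1 / 2) ^ (2 + 1 / δ) *
        (((1 - δ) ^ σ - t / T) ^ (1 / σ) -
          ((1 - δ) ^ σ + (2 ^ (σ + 1) - 1) * (t / T)) ^ (1 / σ)) ∧
      (1 / 2) * (1 + δ) + (1 / 2) ^ (2 + 1 / δ) *
        (((1 - δ) ^ σ - t / T) ^ (1 / σ) -
          ((1 - δ) ^ σ + (2 ^ (σ + 1) - 1) * (t / T)) ^ (1 / σ)) < 1 := by
  have hσ0 : (0:ℝ) < σ := lt_of_lt_of_le one_pos hσ
  have h1δ : (0:ℝ) < 1 - δ := by linarith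
  have hu0 : 0 < (1 - δ) ^ σ := Real.rpow_pos_of_pos h1δ σ
  set u : ℝ := (1 - δ) ^ σ with hu
  have hs : (2:ℝ) ≤ 2 ^ σ := by
    calc (2:ℝ) = 2 ^ (1:ℝ) := (Real.rpow_one 2).symm
    _ ≤ 2 ^ σ := Real.rpow_le_rpow_of_exponent_le one_le_two hσ
  have hs1 : (0:ℝ) < 2 ^ σ - 1 := by linarith
  have htT : t / T < u / (2 ^ σ - 1) := by
    rw [div_lt_div_iff₀ hT hs1]
    have := (lt_div_iff₀ hs1).mp ht
    linarith
  have htT0 : 0 ≤ t / T := div_nonneg ht0 hT.le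
  have hds : u / (2 ^ σ - 1) ≤ u := div_le_self hu0.le (by linarith)
  have hA0 : 0 < u - t / T := by linarith
  have h2s : (2:ℝ) ^ (σ + 1) = 2 ^ σ * 2 := by
    rw [Real.rpow_add two_pos, Real.rpow_one]
  have h2σ1 : (0:ℝ) < 2 ^ (σ + 1) - 1 := by rw [h2s]; linarith
  have hveq : u / (2 ^ σ - 1) * (2 ^ σ - 1) = u := div_mul_cancel₀ u hs1.ne'
  have hv0 : 0 ≤ u / (2 ^ σ - 1) := div_nonneg hu0.le hs1.le
  have hB4 : u + (2 ^ (σ + 1) - 1) * (t / T) < 4 * u := by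
    have h1 : (2 ^ (σ + 1) - 1) * (t / T) < (2 ^ (σ + 1) - 1) * (u / (2 ^ σ - 1)) :=
      mul_lt_mul_of_pos_left htT h2σ1
    have h2 : (2 ^ (σ + 1) - 1) * (u / (2 ^ σ - 1)) ≤ 3 * u := by
      rw [h2s]
      nlinarith [hveq, hv0, hs]
    linarith
  have hB0 : 0 ≤ u + (2 ^ (σ + 1) - 1) * (t / T) :=
    add_nonneg hu0.le (mul_nonneg h2σ1.le htT0)
  have hσinv : 0 < 1 / σ := by positivity
  have hA' : 0 < (u - t / T) ^ (1 / σ) := Real.rpow_pos_of_pos hA0 _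
  have hBle : (u + (2 ^ (σ + 1) - 1) * (t / T)) ^ (1 / σ) ≤ (4 * u) ^ (1 / σ) :=
    Real.rpow_le_rpow hB0 hB4.le hσinv.le
  have h4u : (4 * u) ^ (1 / σ) = 4 ^ (1 / σ) * (1 - δ) := by
    rw [Real.mul_rpow (by norm_num) hu0.le, hu, ← Real.rpow_mul h1δ.le, mul_one_div,
      div_self hσ0.ne', Real.rpow_one]
  have h41 : (4:ℝ) ^ (1 / σ) ≤ 4 := by
    calc (4:ℝ) ^ (1 / σ) ≤ 4 ^ (1:ℝ) := by
          apply Real.rpow_le_rpow_of_exponent_le (by norm_num)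
          rw [div_le_one hσ0]; exact hσ
    _ = 4 := Real.rpow_one 4
  have hBle4 : (u + (2 ^ (σ + 1) - 1) * (t / T)) ^ (1 / σ) ≤ 4 * (1 - δ) := by
    have : (4:ℝ) ^ (1 / σ) * (1 - δ) ≤ 4 * (1 - δ) :=
      mul_le_mul_of_nonneg_right h41 h1δ.le
    rw [h4u] at hBle; linarith
  have hc0 : 0 < (1 / 2 : ℝ) ^ (2 + 1 / δ) := Real.rpow_pos_of_pos (by norm_num) _
  have hc : (1 / 2 : ℝ) ^ (2 + 1 / δ) < 1 / 8 := by
    have h3lt : (3:ℝ) < 2 + 1 / δ := by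
      have : 1 < 1 / δ := one_lt_one_div hδ0 hδ1
      linarith
    calc (1 / 2 : ℝ) ^ (2 + 1 / δ) < (1 / 2 : ℝ) ^ (3:ℝ) :=
          Real.rpow_lt_rpow_of_exponent_gt (by norm_num) (by norm_num) h3lt
    _ = 1 / 8 := by
        rw [show (3:ℝ) = ((3:ℕ):ℝ) by norm_num, Real.rpow_natCast]; norm_num
  set c : ℝ := (1 / 2 : ℝ) ^ (2 + 1 / δ)
  set A' : ℝ := (u - t / T) ^ (1 / σ)
  set B' : ℝ := (u + (2 ^ (σ + 1) - 1) * (t / T)) ^ (1 / σ)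
  have key : c * (A' - B') = c * A' - c * B' := mul_sub c A' B'
  constructor
  · have hx1 : c * B' ≤ c * (4 * (1 - δ)) := mul_le_mul_of_nonneg_left hBle4 hc0.le
    have hx2 : c * (4 * (1 - δ)) < (1 / 8) * (4 * (1 - δ)) :=
      mul_lt_mul_of_pos_right hc (by linarith)
    have hx3 : 0 < c * A' := mul_pos hc0 hA'
    linarith
  · have hAB : u - t / T ≤ u + (2 ^ (σ + 1) - 1) * (t / T) := by
      nlinarith
    have hle : A' ≤ B' := Real.rpow_le_rpow hA0.le hAB hσinv.le
    have : 0 ≤ c * (B' - A') := mul_nonneg hc0.le (by linarith)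
    have key2 : c * (B' - A') = c * B' - c * A' := mul_sub c B' A'
    linarith
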